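/- Let f be a transcendental entire function. Then there exists R₁ = R₁(f) > 0 such that M(r^k) ≥ M(r)^k for all r ≥ R₁ and all real k > 1. -/

import Mathlib

open Set Metric Filter

/-- `f` is a transcendental entire function: entire and not a polynomial. -/
def TranscendentalEntire (f : ℂ → ℂ) : Prop :=
  Differentiable ℂ f ∧ ¬ ∃ p : Polynomial ℂ, ∀ z, f z = p.eval z

/-- The maximum modulus `M(r) = max_{|z| = r} |f z|`. -/
noncomputable def maxMod (f : ℂ → ℂ) (r : ℝ) : ℝ :=
  sSup ((fun z => ‖f z‖) '' Metric.sphere (0 : ℂ) r)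

lemma maxMod_bdd (f : ℂ → ℂ) (hc : Continuous f) (s : ℝ) :
    BddAbove ((fun z => ‖f z‖) '' Metric.sphere (0 : ℂ) s) :=
  (isCompact_sphere 0 s).bddAbove_image (hc.norm).continuousOn

lemma le_maxMod (f : ℂ → ℂ) (hc : Continuous f) {s : ℝ} {z : ℂ}
    (hz : z ∈ Metric.sphere (0:ℂ) s) : ‖f z‖ ≤ maxMod f s :=
  le_csSup (maxMod_bdd f hc s) ⟨z, hz, rfl⟩

lemma maxMod_le (f : ℂ → ℂ) {s C : ℝ} (hs : 0 ≤ s)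
    (h : ∀ z ∈ Metric.sphere (0:ℂ) s, ‖f z‖ ≤ C) : maxMod f s ≤ C := by
  apply csSup_le
  · exact (NormedSpace.sphere_nonempty.mpr hs).image _
  · rintro x ⟨z, hz, rfl⟩; exact h z hz

lemma maxMod_nonneg (f : ℂ → ℂ) (hc : Continuous f) {s : ℝ} (hs : 0 ≤ s) :
    0 ≤ maxMod f s := by
  have hne : (Metric.sphere (0:ℂ) s).Nonempty := NormedSpace.sphere_nonempty.mpr hs
  obtain ⟨z, hz⟩ := hne
  exact (norm_nonneg _).trans (le_maxMod f hc hz)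

lemma coeff_bound (f : ℂ → ℂ) (hd : Differentiable ℂ f) {R : ℝ} (hR : 0 < R) (m : ℕ) :
    ‖cauchyPowerSeries f 0 R m‖ ≤ maxMod f R * (R⁻¹) ^ m := by
  have h1 := norm_cauchyPowerSeries_le f 0 R m
  have h2 : (2 * Real.pi)⁻¹ * ∫ θ : ℝ in (0)..2 * Real.pi, ‖f (circleMap 0 R θ)‖
      ≤ maxMod f R := by
    have hint : ∫ θ : ℝ in (0)..2 * Real.pi, ‖f (circleMap 0 R θ)‖
        ≤ ∫ _θ : ℝ in (0)..2 * Real.pi, maxMod f R := by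
      apply intervalIntegral.integral_mono_on Real.two_pi_pos.le
      · exact ((hd.continuous.comp (continuous_circleMap 0 R)).norm).intervalIntegrable _ _
      · exact intervalIntegrable_const
      · intro θ _
        exact le_maxMod f hd.continuous (circleMap_mem_sphere 0 hR.le θ)
    rw [intervalIntegral.integral_const, smul_eq_mul, sub_zero] at hint
    calc (2 * Real.pi)⁻¹ * ∫ θ : ℝ in (0)..2 * Real.pi, ‖f (circleMap 0 R θ)‖
        ≤ (2 * Real.pi)⁻¹ * (2 * Real.pi * maxMod f R) := by
          apply mul_le_mul_of_nonneg_left hint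
          positivity
      _ = maxMod f R := by
          field_simp
  calc ‖cauchyPowerSeries f 0 R m‖
      ≤ ((2 * Real.pi)⁻¹ * ∫ θ : ℝ in (0)..2 * Real.pi, ‖f (circleMap 0 R θ)‖) * |R|⁻¹ ^ m := h1
    _ ≤ maxMod f R * (R⁻¹) ^ m := by
        rw [abs_of_pos hR]
        apply mul_le_mul_of_nonneg_right h2
        positivity

set_option maxHeartbeats 1000000 in
lemma growth (f : ℂ → ℂ) (hf : TranscendentalEntire f) (n : ℕ) :
    ∀ᶠ r : ℝ in atTop, r^n ≤ maxMod f r := by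
  by_contra hcon
  rw [Filter.not_eventually] at hcon
  simp only [not_le] at hcon
  obtain ⟨hd, hnp⟩ := hf
  set S := cauchyPowerSeries f 0 ((1:NNReal):ℝ) with hS
  have hball : HasFPowerSeriesOnBall f S 0 ⊤ := hd.hasFPowerSeriesOnBall 0 (R := 1) one_pos
  have huniq : ∀ R : NNReal, 0 < R → cauchyPowerSeries f 0 ((R:NNReal):ℝ) = S := by
    intro R hR
    exact (hd.hasFPowerSeriesOnBall 0 hR).hasFPowerSeriesAt.eq_formalMultilinearSeries
      hball.hasFPowerSeriesAt
  have hvanish : ∀ m : ℕ, n < m → S m = 0 := by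
    intro m hm
    have hlim : Filter.Tendsto (fun R : ℝ => R ^ ((n:ℝ) - m)) atTop (nhds 0) := by
      have : (0:ℝ) < (m:ℝ) - n := by
        have := Nat.cast_lt (α := ℝ) |>.mpr hm
        linarith
      simpa [neg_sub] using tendsto_rpow_neg_atTop this
    rw [← norm_eq_zero]
    by_contra hne
    have hpos : 0 < ‖S m‖ := lt_of_le_of_ne (norm_nonneg _) (Ne.symm hne)
    have hev : ∀ᶠ R : ℝ in atTop, R ^ ((n:ℝ) - m) < ‖S m‖ :=
      hlim.eventually_lt_const hpos
    have : ∃ᶠ R : ℝ in atTop, maxMod f R < R ^ n ∧ R ^ ((n:ℝ) - m) < ‖S m‖ ∧ 1 ≤ R :=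
      (hcon.and_eventually (hev.and (eventually_ge_atTop 1)))
    obtain ⟨R, hR1, hR2, hR3⟩ := this.exists
    have hRpos : (0:ℝ) < R := lt_of_lt_of_le one_pos hR3
    have hb : ‖S m‖ ≤ maxMod f R * (R⁻¹) ^ m := by
      rw [← huniq ⟨R, hRpos.le⟩ (by exact_mod_cast hRpos)]
      exact coeff_bound f hd hRpos m
    have hlt : maxMod f R * (R⁻¹) ^ m < R ^ n * (R⁻¹) ^ m := by
      apply mul_lt_mul_of_pos_right hR1
      positivity
    have heq : (R:ℝ) ^ n * (R⁻¹) ^ m = R ^ ((n:ℝ) - m) := by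
      rw [← Real.rpow_natCast R n, ← Real.rpow_natCast R⁻¹ m,
        Real.inv_rpow hRpos.le, ← Real.rpow_neg hRpos.le,
        ← Real.rpow_add hRpos]
      ring_nf
    have : ‖S m‖ < ‖S m‖ := by
      calc ‖S m‖ ≤ maxMod f R * (R⁻¹) ^ m := hb
        _ < R ^ n * (R⁻¹) ^ m := hlt
        _ = R ^ ((n:ℝ) - m) := heq
        _ < ‖S m‖ := hR2
    exact lt_irrefl _ this
  apply hnp
  refine ⟨∑ m ∈ Finset.range (n+1), Polynomial.C (S.coeff m) * Polynomial.X ^ m, fun z => ?_⟩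
  have hsum : HasSum (fun m : ℕ => S m fun _ => z) (f z) := by
    have := hball.hasSum (y := z) (by simp)
    simpa using this
  have hsum2 : f z = ∑ m ∈ Finset.range (n+1), S m fun _ => z := by
    refine hsum.unique (hasSum_sum_of_ne_finset_zero ?_)
    intro m hm
    rw [hvanish m (by simpa using Nat.lt_of_succ_le (Nat.not_lt.mp (fun h => hm (Finset.mem_range.mpr h))))]
    · exact ContinuousMultilinearMap.zero_apply _
  rw [hsum2]
  rw [Polynomial.eval_finset_sum]
  apply Finset.sum_congr rfl
  intro m _
  rw [Polynomial.eval_mul, Polynomial.eval_C, Polynomial.eval_pow, Polynomial.eval_X]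
  rw [S.apply_eq_pow_smul_coeff, smul_eq_mul]
  ring

open Complex HadamardThreeLines in
lemma threeCircles (f : ℂ → ℂ) (hd : Differentiable ℂ f) {x y t : ℝ} (hxy : x < y)
    (ht0 : 0 ≤ t) (ht1 : t ≤ 1) :
    maxMod f (Real.exp ((1-t)*x + t*y)) ≤
      (maxMod f (Real.exp x)) ^ (1-t) * (maxMod f (Real.exp y)) ^ t := by
  set g : ℂ → ℂ := fun z => f (Complex.exp (x + z * ((y:ℂ) - x))) with hg
  have hgd : Differentiable ℂ g := by
    apply hd.comp
    apply Complex.differentiable_exp.comp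
    fun_prop
  have habs : ∀ z : ℂ, ‖(Complex.exp ((x:ℂ) + z * ((y:ℂ) - x)))‖
      = Real.exp (x + z.re * (y - x)) := by
    intro z
    rw [Complex.norm_exp]
    congr 1
    simp [Complex.add_re, Complex.mul_re, Complex.sub_re, Complex.ofReal_re, Complex.ofReal_im]
  have key : ∀ z : ℂ, z.re ∈ Icc (0:ℝ) 1 →
      ‖g z‖ ≤ (maxMod f (Real.exp x)) ^ (1 - z.re) * (maxMod f (Real.exp y)) ^ z.re := by
    intro z hz
    have hB : BddAbove ((norm ∘ g) '' verticalClosedStrip 0 1) := by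
      obtain ⟨C, hC⟩ := (isCompact_closedBall (0:ℂ) (Real.exp y)).exists_bound_of_continuousOn
        hd.continuous.continuousOn
      refine ⟨C, ?_⟩
      rintro _ ⟨w, hw, rfl⟩
      apply hC
      rw [mem_closedBall, dist_zero_right, habs w]
      apply Real.exp_le_exp.mpr
      have hw' : w.re ∈ Icc (0:ℝ) 1 := hw
      nlinarith [hw'.1, hw'.2, hxy]
    have ha : ∀ w ∈ Complex.re ⁻¹' {0}, ‖g w‖ ≤ maxMod f (Real.exp x) := by
      intro w hw
      apply le_maxMod f hd.continuous
      rw [mem_sphere_iff_norm, sub_zero, habs w]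
      rw [show w.re = 0 from hw]
      norm_num
    have hb : ∀ w ∈ Complex.re ⁻¹' {1}, ‖g w‖ ≤ maxMod f (Real.exp y) := by
      intro w hw
      apply le_maxMod f hd.continuous
      rw [mem_sphere_iff_norm, sub_zero, habs w]
      rw [show w.re = 1 from hw]
      norm_num
    have := norm_le_interp_of_mem_verticalClosedStrip₀₁' g (z := z) hz
      hgd.diffContOnCl hB ha hb
    simpa using this
  apply maxMod_le f (Real.exp_nonneg _)
  intro w hw
  set θ : ℝ := Complex.arg w / (y - x) with hθdef
  set z : ℂ := (t:ℂ) + (θ : ℂ) * Complex.I with hz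
  have hzre : z.re = t := by simp [hz]
  have hwabs : ‖w‖ = Real.exp ((1-t)*x + t*y) := by
    rwa [mem_sphere_iff_norm, sub_zero] at hw
  have hexp : Complex.exp ((x:ℂ) + z * ((y:ℂ) - x)) = w := by
    have hyx : (y:ℝ) - x ≠ 0 := sub_ne_zero.mpr hxy.ne'
    have hθ : θ * (y - x) = Complex.arg w := div_mul_cancel₀ _ hyx
    have h1 : (x:ℂ) + z * ((y:ℂ) - x)
        = ((x + t*(y-x) : ℝ) : ℂ) + ((Complex.arg w : ℝ):ℂ) * Complex.I := by
      rw [hz, ← hθ]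
      push_cast
      ring
    rw [h1, Complex.exp_add, ← Complex.ofReal_exp]
    have h2 : (x + t*(y-x)) = (1-t)*x + t*y := by ring
    rw [h2, ← hwabs]
    exact Complex.norm_mul_exp_arg_mul_I w
  have := key z (by rw [hzre]; exact ⟨ht0, ht1⟩)
  rw [hzre] at this
  rw [hg] at this
  simp only at this
  rw [hexp] at this
  exact this

theorem maxMod_rpow_ge (f : ℂ → ℂ) (hf : TranscendentalEntire f) :
    ∃ R₁ : ℝ, 0 < R₁ ∧ ∀ r : ℝ, R₁ ≤ r → ∀ k : ℝ, 1 < k →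
      (maxMod f r) ^ k ≤ maxMod f (r ^ k) := by
  obtain ⟨hd, -⟩ := id hf
  set c : ℝ := max (maxMod f (Real.exp 1)) 1 with hc
  have hc1 : (1:ℝ) ≤ c := le_max_right _ _
  have hc0 : (0:ℝ) < c := lt_of_lt_of_le one_pos hc1
  set n : ℕ := ⌈Real.log c⌉₊ + 1 with hn
  have hlogc : Real.log c ≤ (n:ℝ) := by
    calc Real.log c ≤ (⌈Real.log c⌉₊ : ℝ) := Nat.le_ceil _
      _ ≤ (n:ℝ) := by exact_mod_cast Nat.le_succ _
  obtain ⟨R₀, hR₀⟩ := (growth f hf n).exists_forall_of_atTop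
  refine ⟨max (max R₀ 1) (Real.exp 2), lt_of_lt_of_le (Real.exp_pos 2) (le_max_right _ _),
    fun r hr k hk => ?_⟩
  have hre2 : Real.exp 2 ≤ r := le_trans (le_max_right _ _) hr
  have hrR₀ : R₀ ≤ r := le_trans (le_trans (le_max_left _ _) (le_max_left _ _)) hr
  have hr1 : (1:ℝ) < r := lt_of_lt_of_le (by
    have := Real.exp_pos 2
    nlinarith [Real.add_one_le_exp (2:ℝ)]) hre2
  have hr0 : (0:ℝ) < r := lt_trans one_pos hr1
  set L : ℝ := Real.log r with hL
  have hL2 : (2:ℝ) ≤ L := by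
    rw [hL, show (2:ℝ) = Real.log (Real.exp 2) by rw [Real.log_exp]]
    exact Real.log_le_log (Real.exp_pos 2) hre2
  have hL1 : (1:ℝ) < L := lt_of_lt_of_le one_lt_two hL2
  have hL0 : (0:ℝ) < L := lt_trans one_pos hL1
  have hk0 : (0:ℝ) < k := lt_trans one_pos hk
  have hrL : r = Real.exp L := (Real.exp_log hr0).symm
  have hu : r ^ k = Real.exp (k * L) := by
    rw [Real.rpow_def_of_pos hr0, mul_comm]
  have hkL1 : (1:ℝ) < k * L := by nlinarith
  have hden : (0:ℝ) < k * L - 1 := by linarith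
  set t : ℝ := (L - 1) / (k * L - 1) with ht
  have ht0 : 0 ≤ t := div_nonneg (by linarith) hden.le
  have ht1 : t ≤ 1 := (div_le_one hden).mpr (by nlinarith)
  have hmid : (1 - t) * 1 + t * (k * L) = L := by
    rw [ht]
    linear_combination div_mul_cancel₀ (L - 1) hden.ne'
  -- three circles
  have h3 := threeCircles f hd (x := 1) (y := k * L) hkL1 ht0 ht1
  rw [hmid, ← hrL, ← hu] at h3
  -- basic positivity facts
  have hur : r ≤ r ^ k := by
    calc r = r ^ (1:ℝ) := (Real.rpow_one r).symm
      _ ≤ r ^ k := Real.rpow_le_rpow_left_iff hr1 |>.mpr hk.le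
  have hMu_ge : (r ^ k) ^ n ≤ maxMod f (r ^ k) := hR₀ _ (le_trans hrR₀ hur)
  have hMupos : 0 < maxMod f (r ^ k) :=
    lt_of_lt_of_le (pow_pos (Real.rpow_pos_of_pos hr0 k) n) hMu_ge
  have hMrpos0 : 0 ≤ maxMod f r := maxMod_nonneg f hd.continuous hr0.le
  have hMe_le_c : maxMod f (Real.exp 1) ≤ c := le_max_left _ _
  have hMe0 : 0 ≤ maxMod f (Real.exp 1) := maxMod_nonneg f hd.continuous (Real.exp_pos 1).le
  -- step 1 : M r ≤ c ^ (1-t) * (M u) ^ t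
  have step1 : maxMod f r ≤ c ^ (1 - t) * (maxMod f (r ^ k)) ^ t := by
    refine le_trans h3 ?_
    apply mul_le_mul_of_nonneg_right _ (Real.rpow_nonneg hMupos.le t)
    exact Real.rpow_le_rpow hMe0 hMe_le_c (by linarith)
  -- step 2 : raise to power k
  have step2 : (maxMod f r) ^ k ≤ c ^ (k * (1 - t)) * (maxMod f (r ^ k)) ^ (k * t) := by
    calc (maxMod f r) ^ k ≤ (c ^ (1 - t) * (maxMod f (r ^ k)) ^ t) ^ k :=
          Real.rpow_le_rpow hMrpos0 step1 hk0.le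
      _ = c ^ (k * (1 - t)) * (maxMod f (r ^ k)) ^ (k * t) := by
          rw [Real.mul_rpow (Real.rpow_nonneg hc0.le _) (Real.rpow_nonneg hMupos.le _),
            ← Real.rpow_mul hc0.le, ← Real.rpow_mul hMupos.le]
          ring_nf
  -- step 3 : c ^ (k*(1-t)) ≤ (M u) ^ (1 - k*t)
  have hkt : 1 - k * t = (k - 1) / (k * L - 1) := by
    rw [ht]; field_simp [hden.ne']; ring
  have hktpos : 0 < 1 - k * t := by
    rw [hkt]; exact div_pos (by linarith) hden
  have hexps : k * (1 - t) = (k * L) * (1 - k * t) := by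
    rw [ht]; field_simp [hden.ne']; ring
  have hckL : c ^ (k * L) ≤ maxMod f (r ^ k) := by
    have h1 : c ^ (k * L) = Real.exp ((k * L) * Real.log c) := by
      rw [Real.rpow_def_of_pos hc0, mul_comm]
    have h2 : (r ^ k) ^ n = Real.exp ((k * L) * n) := by
      rw [hu, ← Real.exp_nat_mul]
      ring_nf
    rw [h1]
    refine le_trans ?_ hMu_ge
    rw [h2]
    apply Real.exp_le_exp.mpr
    apply mul_le_mul_of_nonneg_left hlogc (by positivity)
  have step3 : c ^ (k * (1 - t)) ≤ (maxMod f (r ^ k)) ^ (1 - k * t) := by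
    rw [hexps, Real.rpow_mul hc0.le]
    exact Real.rpow_le_rpow (Real.rpow_nonneg hc0.le _) hckL hktpos.le
  -- combine
  calc (maxMod f r) ^ k ≤ c ^ (k * (1 - t)) * (maxMod f (r ^ k)) ^ (k * t) := step2
    _ ≤ (maxMod f (r ^ k)) ^ (1 - k * t) * (maxMod f (r ^ k)) ^ (k * t) :=
        mul_le_mul_of_nonneg_right step3 (Real.rpow_nonneg hMupos.le _)
    _ = maxMod f (r ^ k) := by
        rw [← Real.rpow_add hMupos]
        norm_num
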